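/- Let ρ ∈ (0,1), m ∈ ℕ with m ≥ 1, and A ⊆ B ⊆ K₁ be measurable subsets of the unit parabolic cube. If |A| ≤ ρ|K₁| and whenever K is a dyadic cube of K₁ with |K ∩ A| > ρ|K| the stacked predecessor set K̄^m is contained in B, then |A| ≤ (ρ(m+1)/m)|B|. -/

import Mathlib

open MeasureTheory

noncomputable section

/-- A parabolic box: spatial closed box `[lo, hi]` times the time interval `(t0, t1]`. -/
def parBox (d : ℕ) (lo hi : Fin d → ℝ) (t0 t1 : ℝ) : Set ((Fin d → ℝ) × ℝ) :=
  {p | (∀ s, lo s ≤ p.1 s ∧ p.1 s ≤ hi s) ∧ t0 < p.2 ∧ p.2 ≤ t1}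

/-- The unit parabolic cube `K₁ = [-1,1]^d × (-1,0]`. -/
def K₁ (d : ℕ) : Set ((Fin d → ℝ) × ℝ) :=
  parBox d (fun _ => -1) (fun _ => 1) (-1) 0

/-- The dyadic sub-cube of `K₁` of generation `n` with spatial indices `i`
(each `i s < 2 ^ n`) and time index `j < 4 ^ n`: each spatial side of `K₁`
is split in `2 ^ n` pieces and the time interval in `4 ^ n` pieces. -/
def dyadicCube (d n : ℕ) (i : Fin d → ℕ) (j : ℕ) : Set ((Fin d → ℝ) × ℝ) :=
  parBox d
    (fun s => -1 + (i s : ℝ) * (2 * ((2 : ℝ) ^ n)⁻¹))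
    (fun s => -1 + ((i s : ℝ) + 1) * (2 * ((2 : ℝ) ^ n)⁻¹))
    (-1 + (j : ℝ) * ((4 : ℝ) ^ n)⁻¹)
    (-1 + ((j : ℝ) + 1) * ((4 : ℝ) ^ n)⁻¹)

/-- The set `K̄^m` obtained by stacking `m` time-copies of the predecessor
(parent) of the generation-`n` dyadic cube with indices `i`, `j`:
the parent is the generation-`(n-1)` cube with indices `s ↦ i s / 2` and `j / 4`,
and if its time interval is `(a, b]`, the stacked set keeps the parent's spatial
box and has time interval `(b, b + m * (b - a)]`. -/
def stackedPredecessor (d n m : ℕ) (i : Fin d → ℕ) (j : ℕ) :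
    Set ((Fin d → ℝ) × ℝ) :=
  parBox d
    (fun s => -1 + ((i s / 2 : ℕ) : ℝ) * (2 * ((2 : ℝ) ^ (n - 1))⁻¹))
    (fun s => -1 + (((i s / 2 : ℕ) : ℝ) + 1) * (2 * ((2 : ℝ) ^ (n - 1))⁻¹))
    (-1 + (((j / 4 : ℕ) : ℝ) + 1) * ((4 : ℝ) ^ (n - 1))⁻¹)
    (-1 + (((j / 4 : ℕ) : ℝ) + 1) * ((4 : ℝ) ^ (n - 1))⁻¹ +
      (m : ℝ) * ((4 : ℝ) ^ (n - 1))⁻¹)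

namespace StackedAux

open Set

abbrev Pt (d : ℕ) := (Fin d → ℝ) × ℝ
abbrev Idx (d : ℕ) := ℕ × (Fin d → ℕ) × ℕ

def δx (n : ℕ) : ℝ := 2 * ((2 : ℝ) ^ n)⁻¹
def δt (n : ℕ) : ℝ := ((4 : ℝ) ^ n)⁻¹

lemma δx_pos (n : ℕ) : 0 < δx n := by unfold δx; positivity
lemma δt_pos (n : ℕ) : 0 < δt n := by unfold δt; positivity

def tIoc (h : ℝ) (k : ℕ) : Set ℝ := Ioc (-1 + (k : ℝ) * h) (-1 + ((k : ℝ) + 1) * h)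

def spBox (d n : ℕ) (i : Fin d → ℕ) : Set (Fin d → ℝ) :=
  univ.pi fun s => tIoc (δx n) (i s)

def Q {d : ℕ} (c : Idx d) : Set (Pt d) := spBox d c.1 c.2.1 ×ˢ tIoc (δt c.1) c.2.2

lemma measurableSet_tIoc (h : ℝ) (k : ℕ) : MeasurableSet (tIoc h k) := measurableSet_Ioc

lemma measurableSet_spBox (d n : ℕ) (i : Fin d → ℕ) : MeasurableSet (spBox d n i) :=
  MeasurableSet.univ_pi fun _ => measurableSet_Ioc

lemma measurableSet_Q {d : ℕ} (c : Idx d) : MeasurableSet (Q c) :=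
  (measurableSet_spBox d c.1 c.2.1).prod (measurableSet_tIoc _ _)

lemma vol_tIoc (h : ℝ) (k : ℕ) : volume (tIoc h k) = ENNReal.ofReal h := by
  rw [tIoc, Real.volume_Ioc]
  congr 1
  ring

lemma vol_spBox (d n : ℕ) (i : Fin d → ℕ) :
    volume (spBox d n i) = ENNReal.ofReal (δx n) ^ d := by
  rw [spBox, volume_pi_pi]
  simp [vol_tIoc]

lemma vol_Q {d : ℕ} (c : Idx d) :
    volume (Q c) = ENNReal.ofReal (δx c.1) ^ d * ENNReal.ofReal (δt c.1) := by
  rw [Q, Measure.volume_eq_prod, Measure.prod_prod, vol_spBox, vol_tIoc]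

-- 1-D dyadic lemmas
lemma tIoc_subset {h' : ℝ} (h'pos : 0 < h') {q : ℕ} (hq : 0 < q) (k' : ℕ) :
    tIoc h' k' ⊆ tIoc ((q : ℝ) * h') (k' / q) := by
  have h1 : ((k' / q : ℕ) : ℝ) * (q : ℝ) ≤ (k' : ℝ) := by
    exact_mod_cast Nat.div_mul_le_self k' q
  have h2 : (k' : ℝ) + 1 ≤ (((k' / q : ℕ) : ℝ) + 1) * (q : ℝ) := by
    have : k' + 1 ≤ (k' / q + 1) * q := by
      have : k' < (k' / q + 1) * q := by
        rw [← Nat.div_lt_iff_lt_mul hq]; omega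
      omega
    exact_mod_cast this
  apply Ioc_subset_Ioc <;> nlinarith

lemma eq_div_of_tIoc_nonempty {h' : ℝ} (h'pos : 0 < h') {q : ℕ} (hq : 0 < q) {k k' : ℕ}
    (hne : (tIoc ((q : ℝ) * h') k ∩ tIoc h' k').Nonempty) : k = k' / q := by
  obtain ⟨x, ⟨hx1, hx2⟩, ⟨hx3, hx4⟩⟩ := hne
  have e1 : (k : ℝ) * ((q : ℝ) * h') < ((k' : ℝ) + 1) * h' := by linarith
  have e2 : (k' : ℝ) * h' < ((k : ℝ) + 1) * ((q : ℝ) * h') := by linarith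
  have n1 : (k : ℝ) * q < (k' : ℝ) + 1 := by nlinarith
  have n2 : (k' : ℝ) < ((k : ℝ) + 1) * q := by nlinarith
  have m1 : k * q ≤ k' := by
    have : (((k * q : ℕ)) : ℝ) < (k' : ℝ) + 1 := by push_cast; linarith
    have := (Nat.cast_lt (α := ℝ)).1 (by push_cast at this ⊢; linarith : ((k * q : ℕ) : ℝ) < ((k' + 1 : ℕ) : ℝ))
    omega
  have m2 : k' < (k + 1) * q := by
    have : ((k' : ℕ) : ℝ) < (((k + 1) * q : ℕ) : ℝ) := by push_cast; linarith
    exact_mod_cast this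
  symm
  exact Nat.div_eq_of_lt_le m1 (by simpa [Nat.succ_mul] using m2)


-- ancestors
def anc {d : ℕ} (k : ℕ) (c : Idx d) : Idx d :=
  (k, fun s => c.2.1 s / 2 ^ (c.1 - k), c.2.2 / 4 ^ (c.1 - k))

lemma anc_fst {d : ℕ} (k : ℕ) (c : Idx d) : (anc k c).1 = k := rfl

lemma anc_self {d : ℕ} (c : Idx d) : anc c.1 c = c := by
  rcases c with ⟨n, i, j⟩
  simp [anc]

lemma anc_anc {d : ℕ} {k k' : ℕ} (c : Idx d) (h1 : k ≤ k') (h2 : k' ≤ c.1) :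
    anc k (anc k' c) = anc k c := by
  rcases c with ⟨n, i, j⟩
  simp only at h2
  have hx : ∀ a : ℕ, a / 2 ^ (n - k') / 2 ^ (k' - k) = a / 2 ^ (n - k) := fun a => by
    rw [Nat.div_div_eq_div_mul, ← pow_add]
    congr 2
    omega
  have ht : j / 4 ^ (n - k') / 4 ^ (k' - k) = j / 4 ^ (n - k) := by
    rw [Nat.div_div_eq_div_mul, ← pow_add]
    congr 2
    omega
  show (k, fun s => i s / 2 ^ (n - k') / 2 ^ (k' - k), j / 4 ^ (n - k') / 4 ^ (k' - k))
      = (k, fun s => i s / 2 ^ (n - k), j / 4 ^ (n - k))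
  rw [ht]
  congr 1
  exact congrArg₂ Prod.mk (funext fun s => hx (i s)) rfl

lemma δx_eq {k n : ℕ} (hkn : k ≤ n) : δx k = ((2 ^ (n - k) : ℕ) : ℝ) * δx n := by
  have h : (2 : ℝ) ^ n = 2 ^ (n - k) * 2 ^ k := by
    rw [← pow_add]; congr 1; omega
  have h2 : ((2 : ℝ) ^ k) ≠ 0 := by positivity
  have h3 : ((2 : ℝ) ^ n) ≠ 0 := by positivity
  rw [δx, δx]
  push_cast
  field_simp
  nlinarith [h]

lemma δt_eq {k n : ℕ} (hkn : k ≤ n) : δt k = ((4 ^ (n - k) : ℕ) : ℝ) * δt n := by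
  have h : (4 : ℝ) ^ n = 4 ^ (n - k) * 4 ^ k := by
    rw [← pow_add]; congr 1; omega
  have h2 : ((4 : ℝ) ^ k) ≠ 0 := by positivity
  have h3 : ((4 : ℝ) ^ n) ≠ 0 := by positivity
  rw [δt, δt]
  push_cast
  field_simp
  nlinarith [h]

lemma Q_subset_anc {d : ℕ} {c : Idx d} {k : ℕ} (hk : k ≤ c.1) : Q c ⊆ Q (anc k c) := by
  rcases c with ⟨n, i, j⟩
  simp only at hk
  show spBox d n i ×ˢ tIoc (δt n) j ⊆ spBox d k (fun s => i s / 2 ^ (n - k)) ×ˢ tIoc (δt k) (j / 4 ^ (n - k))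
  apply Set.prod_mono
  · apply Set.pi_mono
    intro s _
    rw [show δx k = ((2 ^ (n - k) : ℕ) : ℝ) * δx n from δx_eq hk]
    exact tIoc_subset (δx_pos n) (by positivity) (i s)
  · rw [show δt k = ((4 ^ (n - k) : ℕ) : ℝ) * δt n from δt_eq hk]
    exact tIoc_subset (δt_pos n) (by positivity) j

lemma eq_anc_of_nonempty {d : ℕ} {c c' : Idx d} (h : c.1 ≤ c'.1)
    (hne : (Q c ∩ Q c').Nonempty) : c = anc c.1 c' := by
  obtain ⟨p, ⟨hp1, hp2⟩, ⟨hp1', hp2'⟩⟩ := hne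
  rcases c with ⟨n, i, j⟩
  rcases c' with ⟨n', i', j'⟩
  simp only at h
  have hspq : ∀ s : Fin d, i s = i' s / 2 ^ (n' - n) := by
    intro s
    have hx : p.1 s ∈ tIoc (δx n) (i s) := hp1 s (mem_univ s)
    have hx' : p.1 s ∈ tIoc (δx n') (i' s) := hp1' s (mem_univ s)
    refine eq_div_of_tIoc_nonempty (δx_pos n') (q := 2 ^ (n' - n)) (by positivity) ⟨p.1 s, ?_, hx'⟩
    rwa [← δx_eq h]
  have htq : j = j' / 4 ^ (n' - n) := by
    refine eq_div_of_tIoc_nonempty (δt_pos n') (q := 4 ^ (n' - n)) (by positivity) ⟨p.2, ?_, hp2'⟩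
    rwa [← δt_eq h]
  show (n, i, j) = (n, fun s => i' s / 2 ^ (n' - n), j' / 4 ^ (n' - n))
  rw [← htq]
  congr 1
  exact congrArg₂ Prod.mk (funext fun s => hspq s) rfl


def valid {d : ℕ} (c : Idx d) : Prop :=
  1 ≤ c.1 ∧ (∀ s, c.2.1 s < 2 ^ c.1) ∧ c.2.2 < 4 ^ c.1

lemma valid_anc {d : ℕ} {c : Idx d} (hc : valid c) {k : ℕ} (h1 : 1 ≤ k) (h2 : k ≤ c.1) :
    valid (anc k c) := by
  rcases c with ⟨n, i, j⟩
  obtain ⟨-, hi, hj⟩ := hc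
  refine ⟨h1, fun s => ?_, ?_⟩
  · show i s / 2 ^ (n - k) < 2 ^ k
    rw [Nat.div_lt_iff_lt_mul (by positivity), ← pow_add]
    have : k + (n - k) = n := by omega
    rw [this]
    exact hi s
  · show j / 4 ^ (n - k) < 4 ^ k
    rw [Nat.div_lt_iff_lt_mul (by positivity), ← pow_add]
    have : k + (n - k) = n := by omega
    rw [this]
    exact hj

-- the half-open unit cube
def halfK₁ (d : ℕ) : Set (Pt d) := Q ((0, fun _ => 0, 0) : Idx d)

lemma K₁_eq (d : ℕ) :
    K₁ d = (univ.pi fun _ : Fin d => Icc (-1 : ℝ) 1) ×ˢ Ioc (-1 : ℝ) 0 := by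
  ext p
  simp only [K₁, parBox, mem_setOf_eq, mem_prod, mem_pi, mem_univ, forall_true_left, mem_Icc,
    mem_Ioc, true_implies]

lemma vol_K₁_ne_top (d : ℕ) : volume (K₁ d) ≠ ⊤ := by
  rw [K₁_eq, Measure.volume_eq_prod, Measure.prod_prod, volume_pi_pi]
  simp only [Real.volume_Icc, Real.volume_Ioc]
  refine ENNReal.mul_ne_top ?_ ?_
  · exact (ENNReal.prod_lt_top fun i _ => ENNReal.ofReal_lt_top).ne
  · exact ENNReal.ofReal_ne_top

lemma tIoc0x : tIoc (δx 0) 0 = Ioc (-1 : ℝ) 1 := by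
  rw [tIoc, δx]
  norm_num

lemma tIoc0t : tIoc (δt 0) 0 = Ioc (-1 : ℝ) 0 := by
  rw [tIoc, δt]
  norm_num

lemma halfK₁_eq (d : ℕ) :
    halfK₁ d = (univ.pi fun _ : Fin d => Ioc (-1 : ℝ) 1) ×ˢ Ioc (-1 : ℝ) 0 := by
  show spBox d 0 (fun _ => 0) ×ˢ tIoc (δt 0) 0 = _
  rw [tIoc0t, spBox]
  congr 1
  apply Set.pi_congr rfl
  intro s _
  exact tIoc0x

lemma diff_halfK₁_null (d : ℕ) : volume (K₁ d \ halfK₁ d) = 0 := by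
  have hsub : K₁ d \ halfK₁ d ⊆ ⋃ s : Fin d, {p : Pt d | p.1 s = -1} := by
    rintro ⟨x, t⟩ ⟨hp, hnp⟩
    rw [K₁_eq] at hp
    obtain ⟨hx, ht⟩ := hp
    simp only [mem_pi, mem_univ, true_implies, mem_Icc] at hx
    by_contra hc
    simp only [mem_iUnion, mem_setOf_eq, not_exists] at hc
    apply hnp
    rw [halfK₁_eq]
    refine ⟨?_, ht⟩
    intro s _
    rcases lt_or_eq_of_le (hx s).1 with hlt | heq
    · exact ⟨hlt, (hx s).2⟩
    · exact absurd heq.symm (hc s)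
  refine measure_mono_null hsub (measure_iUnion_null fun s => ?_)
  have hEq : {p : Pt d | p.1 s = -1} = ({x : Fin d → ℝ | x s = -1} ×ˢ (univ : Set ℝ)) := by
    ext p
    simp [Set.mem_prod]
  rw [hEq, Measure.volume_eq_prod, Measure.prod_prod]
  have h0 : volume {x : Fin d → ℝ | x s = -1} = 0 := by
    have := MeasureTheory.Measure.pi_hyperplane (fun _ : Fin d => (volume : Measure ℝ)) s (-1 : ℝ)
    simpa [MeasureTheory.volume_pi] using this
  rw [h0, zero_mul]

-- partition existence
lemma exists_tIoc_mem {h : ℝ} (hpos : 0 < h) {y : ℝ} :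
    ∀ {N : ℕ}, y ∈ Ioc (-1 : ℝ) (-1 + (N : ℝ) * h) → ∃ k, k < N ∧ y ∈ tIoc h k := by
  intro N
  induction N with
  | zero =>
    intro hy
    obtain ⟨h1, h2⟩ := hy
    push_cast at h2
    linarith
  | succ N ih =>
    intro hy
    by_cases hle : y ≤ -1 + (N : ℝ) * h
    · obtain ⟨k, hk, hmem⟩ := ih ⟨hy.1, hle⟩
      exact ⟨k, by omega, hmem⟩
    · refine ⟨N, by omega, ⟨by linarith, ?_⟩⟩
      have := hy.2
      push_cast at this ⊢
      linarith

lemma pow_mul_δx (n : ℕ) : ((2 ^ n : ℕ) : ℝ) * δx n = 2 := by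
  rw [δx]
  push_cast
  field_simp

lemma pow_mul_δt (n : ℕ) : ((4 ^ n : ℕ) : ℝ) * δt n = 1 := by
  rw [δt]
  push_cast
  field_simp

lemma exists_cube_mem {d : ℕ} {p : Pt d} (hp : p ∈ halfK₁ d) (n : ℕ) (hn : 1 ≤ n) :
    ∃ c : Idx d, valid c ∧ c.1 = n ∧ p ∈ Q c := by
  classical
  rw [halfK₁_eq] at hp
  obtain ⟨hp1, hp2⟩ := hp
  simp only [mem_pi, mem_univ, true_implies] at hp1
  have hsp : ∀ s : Fin d, ∃ k, k < 2 ^ n ∧ p.1 s ∈ tIoc (δx n) k := by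
    intro s
    apply exists_tIoc_mem (δx_pos n)
    rw [pow_mul_δx]
    have h1 := hp1 s
    constructor
    · exact h1.1
    · linarith [h1.2]
  choose i hi1 hi2 using hsp
  have htp : ∃ k, k < 4 ^ n ∧ p.2 ∈ tIoc (δt n) k := by
    apply exists_tIoc_mem (δt_pos n)
    rw [pow_mul_δt]
    exact ⟨hp2.1, by linarith [hp2.2]⟩
  obtain ⟨j, hj1, hj2⟩ := htp
  exact ⟨(n, i, j), ⟨hn, hi1, hj1⟩, rfl, fun s _ => hi2 s, hj2⟩

-- diameter bound
lemma dist_le_of_mem_tIoc {h : ℝ} {k : ℕ} {x y : ℝ} (hx : x ∈ tIoc h k) (hy : y ∈ tIoc h k) :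
    dist x y ≤ h := by
  obtain ⟨hx1, hx2⟩ := hx
  obtain ⟨hy1, hy2⟩ := hy
  rw [Real.dist_eq, abs_sub_le_iff]
  constructor <;> nlinarith

lemma dist_le_of_mem_Q {d : ℕ} {c : Idx d} {p q : Pt d} (hp : p ∈ Q c) (hq : q ∈ Q c) :
    dist p q ≤ δx c.1 := by
  obtain ⟨hp1, hp2⟩ := hp
  obtain ⟨hq1, hq2⟩ := hq
  rw [Prod.dist_eq]
  have hd : (0 : ℝ) ≤ δx c.1 := (δx_pos _).le
  apply max_le
  · rw [dist_pi_le_iff hd]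
    intro s
    exact dist_le_of_mem_tIoc (hp1 s (mem_univ s)) (hq1 s (mem_univ s))
  · refine le_trans (dist_le_of_mem_tIoc hp2 hq2) ?_
    rw [δt, δx]
    have h1 : ((2 : ℝ) ^ c.1)⁻¹ ≤ 2 * ((2 : ℝ) ^ c.1)⁻¹ := by
      have : (0 : ℝ) < ((2 : ℝ) ^ c.1)⁻¹ := by positivity
      linarith
    refine le_trans ?_ h1
    apply inv_anti₀ (by positivity)
    exact pow_le_pow_left₀ (by norm_num) (by norm_num) c.1


-- dyadic cube vs Q
lemma dyadicCube_eq (d n : ℕ) (i : Fin d → ℕ) (j : ℕ) :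
    dyadicCube d n i j =
      (univ.pi fun s => Icc (-1 + (i s : ℝ) * δx n) (-1 + ((i s : ℝ) + 1) * δx n)) ×ˢ
        tIoc (δt n) j := by
  ext p
  simp only [dyadicCube, parBox, mem_setOf_eq, mem_prod, mem_pi, mem_univ, true_implies, mem_Icc,
    tIoc, mem_Ioc, δx, δt]

lemma vol_dyadicCube (d n : ℕ) (i : Fin d → ℕ) (j : ℕ) :
    volume (dyadicCube d n i j) = volume (Q ((n, i, j) : Idx d)) := by
  rw [dyadicCube_eq, vol_Q, Measure.volume_eq_prod, Measure.prod_prod, volume_pi_pi, vol_tIoc]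
  congr 1
  have : ∀ s : Fin d, volume (Icc (-1 + (i s : ℝ) * δx n) (-1 + ((i s : ℝ) + 1) * δx n)) =
      ENNReal.ofReal (δx n) := by
    intro s
    rw [Real.volume_Icc]
    congr 1
    ring
  simp only [this, Finset.prod_const, Finset.card_univ, Fintype.card_fin]

lemma Q_subset_dyadicCube (d n : ℕ) (i : Fin d → ℕ) (j : ℕ) :
    Q ((n, i, j) : Idx d) ⊆ dyadicCube d n i j := by
  rw [dyadicCube_eq]
  apply Set.prod_mono
  · exact Set.pi_mono fun s _ => Ioc_subset_Icc_self
  · exact subset_rfl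

-- badness
def isBad {d : ℕ} (ρ : ℝ) (A : Set (Pt d)) (c : Idx d) : Prop :=
  ENNReal.ofReal ρ * volume (Q c) < volume (Q c ∩ A)

lemma isBad_dyadic {d : ℕ} {ρ : ℝ} {A : Set (Pt d)} {n : ℕ} {i : Fin d → ℕ} {j : ℕ}
    (h : isBad ρ A ((n, i, j) : Idx d)) :
    ENNReal.ofReal ρ * volume (dyadicCube d n i j) < volume (dyadicCube d n i j ∩ A) := by
  rw [vol_dyadicCube]
  exact lt_of_lt_of_le h (measure_mono (inter_subset_inter_left A (Q_subset_dyadicCube d n i j)))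

-- parent and stacked set
def par {d : ℕ} (c : Idx d) : Idx d := anc (c.1 - 1) c

def stk {d : ℕ} (m : ℕ) (p : Idx d) : Set (Pt d) :=
  spBox d p.1 p.2.1 ×ˢ
    Ioc (-1 + ((p.2.2 : ℝ) + 1) * δt p.1) (-1 + ((p.2.2 : ℝ) + 1) * δt p.1 + (m : ℝ) * δt p.1)

lemma par_components {d : ℕ} {c : Idx d} (hc : 1 ≤ c.1) :
    par c = (c.1 - 1, fun s => c.2.1 s / 2, c.2.2 / 4) := by
  rcases c with ⟨n, i, j⟩
  simp only at hc
  show (n - 1, fun s => i s / 2 ^ (n - (n - 1)), j / 4 ^ (n - (n - 1))) = _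
  have h1 : n - (n - 1) = 1 := by omega
  rw [h1]
  norm_num

lemma stk_subset_stackedPredecessor {d m : ℕ} {c : Idx d} (hc : 1 ≤ c.1) :
    stk m (par c) ⊆ stackedPredecessor d c.1 m c.2.1 c.2.2 := by
  rcases c with ⟨n, i, j⟩
  simp only at hc
  rw [par_components hc]
  rintro ⟨x, t⟩ ⟨hx, ht⟩
  refine ⟨fun s => ?_, ?_⟩
  · have := hx s (mem_univ s)
    obtain ⟨h1, h2⟩ := this
    constructor
    · exact le_of_lt h1
    · exact h2
  · exact ht

-- no generation-1 bad cubes (else contradiction with B ⊆ K₁)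
lemma gen1_stacked_not_in_K₁ {d m : ℕ} (hm : 1 ≤ m) {i : Fin d → ℕ} {j : ℕ}
    (hi : ∀ s, i s < 2 ^ 1) (hj : j < 4 ^ 1) :
    ¬ (stackedPredecessor d 1 m i j ⊆ K₁ d) := by
  intro hsub
  have hmem : ((fun _ => 0, (m : ℝ)) : Pt d) ∈ stackedPredecessor d 1 m i j := by
    refine ⟨fun s => ?_, ?_, ?_⟩
    · have h0 : i s / 2 = 0 := Nat.div_eq_of_lt (by simpa using hi s)
      show -1 + ((i s / 2 : ℕ) : ℝ) * (2 * ((2 : ℝ) ^ (1 - 1 : ℕ))⁻¹) ≤ 0 ∧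
        (0 : ℝ) ≤ -1 + (((i s / 2 : ℕ) : ℝ) + 1) * (2 * ((2 : ℝ) ^ (1 - 1 : ℕ))⁻¹)
      rw [h0]
      norm_num
    · have h0 : j / 4 = 0 := Nat.div_eq_of_lt (by simpa using hj)
      show -1 + (((j / 4 : ℕ) : ℝ) + 1) * ((4 : ℝ) ^ (1 - 1 : ℕ))⁻¹ < (m : ℝ)
      rw [h0]
      norm_num
      exact_mod_cast hm
    · show (m : ℝ) ≤ -1 + (((j / 4 : ℕ) : ℝ) + 1) * ((4 : ℝ) ^ (1 - 1 : ℕ))⁻¹ +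
        (m : ℝ) * ((4 : ℝ) ^ (1 - 1 : ℕ))⁻¹
      have h0 : j / 4 = 0 := Nat.div_eq_of_lt (by simpa using hj)
      rw [h0]
      norm_num
  have := (hsub hmem).2.2
  simp only at this
  have hm' : (1 : ℝ) ≤ (m : ℝ) := by exact_mod_cast hm
  linarith

-- maximal selection
def maxl {d : ℕ} (S : Set (Idx d)) : Set (Idx d) :=
  {p ∈ S | ∀ k, 1 ≤ k → k < p.1 → anc k p ∉ S}

lemma exists_maxl {d : ℕ} {S : Set (Idx d)} (hS : ∀ c ∈ S, 1 ≤ c.1) {c : Idx d} (hc : c ∈ S) :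
    ∃ p ∈ maxl S, Q c ⊆ Q p := by
  classical
  have hPn : ∃ k, 1 ≤ k ∧ k ≤ c.1 ∧ anc k c ∈ S :=
    ⟨c.1, hS c hc, le_refl _, by rw [anc_self]; exact hc⟩
  obtain ⟨hk1, hk2, hkS⟩ := Nat.find_spec hPn
  refine ⟨anc (Nat.find hPn) c, ⟨hkS, ?_⟩, Q_subset_anc hk2⟩
  intro k hk1' hk2' hkin
  rw [anc_fst] at hk2'
  rw [anc_anc c (le_of_lt hk2') hk2] at hkin
  exact Nat.find_min hPn hk2' ⟨hk1', le_trans (le_of_lt hk2') hk2, hkin⟩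

lemma maxl_subset {d : ℕ} (S : Set (Idx d)) : maxl S ⊆ S := fun _ h => h.1

lemma maxl_pairwiseDisjoint {d : ℕ} {S : Set (Idx d)} (hS : ∀ c ∈ S, 1 ≤ c.1) :
    (maxl S).PairwiseDisjoint (Q (d := d)) := by
  intro p hp q hq hpq
  rw [Function.onFun, Set.disjoint_iff_inter_eq_empty]
  by_contra hne
  have hne' : (Q p ∩ Q q).Nonempty := nonempty_iff_ne_empty.2 hne
  rcases le_total p.1 q.1 with hle | hle
  · have heq := eq_anc_of_nonempty hle hne'
    rcases lt_or_eq_of_le hle with hlt | heqn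
    · exact hq.2 p.1 (hS p hp.1) hlt (heq ▸ hp.1)
    · rw [heqn] at heq
      rw [anc_self] at heq
      exact hpq heq
  · have hne'' : (Q q ∩ Q p).Nonempty := by rwa [inter_comm]
    have heq := eq_anc_of_nonempty hle hne''
    rcases lt_or_eq_of_le hle with hlt | heqn
    · exact hp.2 q.1 (hS q hq.1) hlt (heq ▸ hq.1)
    · rw [heqn] at heq
      rw [anc_self] at heq
      exact hpq heq.symm


-- 1-D stacked interval lemma
lemma oneD_finset {ι : Type*} (m : ℕ) (hm : 1 ≤ m) (a b c : ι → ℝ) :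
    ∀ (N : ℕ) (F : Finset ι), F.card = N →
    (∀ p ∈ F, a p < b p) →
    (∀ p ∈ F, c p = b p + (m : ℝ) * (b p - a p)) →
    (∀ p ∈ F, ∀ q ∈ F, p ≠ q → Ioc (a p) (b p) ∩ Ioc (a q) (b q) = ∅) →
    volume (⋃ p ∈ F, Ioc (a p) (c p)) ≤
      (1 + (m : ENNReal)⁻¹) * volume (⋃ p ∈ F, Ioc (b p) (c p)) := by
  classical
  intro N
  induction N with
  | zero =>
    intro F hcard _ _ _
    rw [Finset.card_eq_zero] at hcard
    subst hcard
    simp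
  | succ N ih =>
    intro F hcard hab hc hdisj
    have hFne : F.Nonempty := Finset.card_pos.1 (by omega)
    obtain ⟨p₀, hp₀F, hmax⟩ := Finset.exists_max_image F b hFne
    set F' := F.erase p₀ with hF'def
    have hcard' : F'.card = N := by
      rw [hF'def, Finset.card_erase_of_mem hp₀F, hcard]
      omega
    have hmemF' : ∀ p ∈ F', p ∈ F := fun p hp => Finset.mem_of_mem_erase hp
    have hba : ∀ p ∈ F', b p ≤ a p₀ := by
      intro p hp
      by_contra hlt
      push_neg at hlt
      have hne : p₀ ≠ p := fun h => Finset.ne_of_mem_erase hp h.symm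
      have hmem : b p ∈ Ioc (a p₀) (b p₀) ∩ Ioc (a p) (b p) :=
        ⟨⟨hlt, hmax p (hmemF' p hp)⟩, ⟨hab p (hmemF' p hp), le_refl _⟩⟩
      rw [hdisj p₀ hp₀F p (hmemF' p hp) hne] at hmem
      exact hmem
    set U' := ⋃ p ∈ F', Ioc (a p) (c p) with hU'def
    set V' := ⋃ p ∈ F', Ioc (b p) (c p) with hV'def
    have hmU' : MeasurableSet U' :=
      MeasurableSet.biUnion F'.countable_toSet fun _ _ => measurableSet_Ioc
    have hmV' : MeasurableSet V' :=
      MeasurableSet.biUnion F'.countable_toSet fun _ _ => measurableSet_Ioc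
    have hable : ∀ p ∈ F, a p ≤ b p := fun p hp => (hab p hp).le
    have hVU : V' ⊆ U' := by
      refine Set.iUnion₂_mono fun p hp => Ioc_subset_Ioc_left (hable p (hmemF' p hp))
    have habc : ∀ p ∈ F, b p ≤ c p := by
      intro p hp
      rw [hc p hp]
      have h1 := hab p hp
      have h2 : (0 : ℝ) ≤ (m : ℝ) := Nat.cast_nonneg m
      nlinarith
    have hm0 : (m : ENNReal) ≠ 0 := by
      simp only [ne_eq, Nat.cast_eq_zero]
      omega
    have key : volume (Ioc (a p₀) (b p₀) \ U') + volume (Ioc (b p₀) (c p₀) \ U') ≤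
        (1 + (m : ENNReal)⁻¹) * volume (Ioc (b p₀) (c p₀) \ V') := by
      by_cases hex : ∃ p ∈ F', b p₀ ≤ c p
      · obtain ⟨p₁, hp₁, hcp₁⟩ := hex
        have hsub : Ioc (a p₀) (b p₀) ⊆ U' := by
          intro t ht
          refine Set.mem_biUnion hp₁ ⟨lt_of_le_of_lt ?_ ht.1, le_trans ht.2 hcp₁⟩
          exact le_trans (hable p₁ (hmemF' p₁ hp₁)) (hba p₁ hp₁)
        have h1 : volume (Ioc (a p₀) (b p₀) \ U') = 0 := by
          rw [Set.diff_eq_empty.2 hsub]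
          exact measure_empty
        rw [h1, zero_add]
        calc volume (Ioc (b p₀) (c p₀) \ U')
            ≤ volume (Ioc (b p₀) (c p₀) \ V') := measure_mono (Set.diff_subset_diff_right hVU)
          _ ≤ (1 + (m : ENNReal)⁻¹) * volume (Ioc (b p₀) (c p₀) \ V') :=
              le_mul_of_one_le_left zero_le (le_add_right (le_refl 1))
      · push_neg at hex
        have hV'cap : Ioc (b p₀) (c p₀) \ V' = Ioc (b p₀) (c p₀) := by
          apply sdiff_eq_self_iff_disjoint.2
          rw [Set.disjoint_left]
          intro t htV htI
          obtain ⟨p, hp, htp⟩ := Set.mem_iUnion₂.1 htV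
          exact absurd htI.1 (not_lt.2 (le_trans htp.2 (hex p hp).le))
        have hlen : volume (Ioc (b p₀) (c p₀)) = ENNReal.ofReal ((m : ℝ) * (b p₀ - a p₀)) := by
          rw [Real.volume_Ioc, hc p₀ hp₀F]
          ring_nf
        have hmulinv : (m : ENNReal)⁻¹ * ENNReal.ofReal ((m : ℝ) * (b p₀ - a p₀)) =
            ENNReal.ofReal (b p₀ - a p₀) := by
          rw [ENNReal.ofReal_mul (Nat.cast_nonneg m), ENNReal.ofReal_natCast, ← mul_assoc,
            ENNReal.inv_mul_cancel hm0 (ENNReal.natCast_ne_top m), one_mul]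
        have hsplit : (1 + (m : ENNReal)⁻¹) * volume (Ioc (b p₀) (c p₀) \ V') =
            ENNReal.ofReal ((m : ℝ) * (b p₀ - a p₀)) + ENNReal.ofReal (b p₀ - a p₀) := by
          rw [hV'cap, hlen, add_mul, one_mul, hmulinv]
        rw [hsplit]
        have l1 : volume (Ioc (a p₀) (b p₀) \ U') ≤ ENNReal.ofReal (b p₀ - a p₀) := by
          refine le_trans (measure_mono Set.diff_subset) ?_
          rw [Real.volume_Ioc]
        have l2 : volume (Ioc (b p₀) (c p₀) \ U') ≤
            ENNReal.ofReal ((m : ℝ) * (b p₀ - a p₀)) := by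
          refine le_trans (measure_mono Set.diff_subset) ?_
          rw [hlen]
        calc volume (Ioc (a p₀) (b p₀) \ U') + volume (Ioc (b p₀) (c p₀) \ U')
            ≤ ENNReal.ofReal (b p₀ - a p₀) + ENNReal.ofReal ((m : ℝ) * (b p₀ - a p₀)) :=
              add_le_add l1 l2
          _ = ENNReal.ofReal ((m : ℝ) * (b p₀ - a p₀)) + ENNReal.ofReal (b p₀ - a p₀) :=
              add_comm _ _
    have hFins : F = insert p₀ F' := (Finset.insert_erase hp₀F).symm
    have hUdecomp : (⋃ p ∈ F, Ioc (a p) (c p)) = U' ∪ Ioc (a p₀) (c p₀) := by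
      rw [hFins, Finset.set_biUnion_insert]
      exact Set.union_comm _ _
    have hVdecomp : (⋃ p ∈ F, Ioc (b p) (c p)) = V' ∪ Ioc (b p₀) (c p₀) := by
      rw [hFins, Finset.set_biUnion_insert]
      exact Set.union_comm _ _
    have hsplitI : Ioc (a p₀) (c p₀) = Ioc (a p₀) (b p₀) ∪ Ioc (b p₀) (c p₀) :=
      (Ioc_union_Ioc_eq_Ioc (hable p₀ hp₀F) (habc p₀ hp₀F)).symm
    have hih := ih F' hcard' (fun p hp => hab p (hmemF' p hp)) (fun p hp => hc p (hmemF' p hp))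
      (fun p hp q hq hpq => hdisj p (hmemF' p hp) q (hmemF' q hq) hpq)
    calc volume (⋃ p ∈ F, Ioc (a p) (c p))
        = volume (U' ∪ (Ioc (a p₀) (c p₀) \ U')) := by rw [hUdecomp, Set.union_diff_self]
      _ ≤ volume U' + volume (Ioc (a p₀) (c p₀) \ U') := measure_union_le _ _
      _ ≤ volume U' + (volume (Ioc (a p₀) (b p₀) \ U') + volume (Ioc (b p₀) (c p₀) \ U')) := by
          refine add_le_add_right ?_ _
          rw [hsplitI, Set.union_diff_distrib]
          exact measure_union_le _ _
      _ ≤ (1 + (m : ENNReal)⁻¹) * volume V' +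
            (1 + (m : ENNReal)⁻¹) * volume (Ioc (b p₀) (c p₀) \ V') := add_le_add hih key
      _ = (1 + (m : ENNReal)⁻¹) * (volume V' + volume (Ioc (b p₀) (c p₀) \ V')) :=
          (mul_add _ _ _).symm
      _ = (1 + (m : ENNReal)⁻¹) * volume (⋃ p ∈ F, Ioc (b p) (c p)) := by
          rw [hVdecomp, ← Set.union_diff_self,
            measure_union disjoint_sdiff_self_right (measurableSet_Ioc.diff hmV')]


lemma oneD_countable {ι : Type*} [Countable ι] (m : ℕ) (hm : 1 ≤ m) (a b c : ι → ℝ)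
    (T : Set ι)
    (hab : ∀ p ∈ T, a p < b p)
    (hc : ∀ p ∈ T, c p = b p + (m : ℝ) * (b p - a p))
    (hdisj : ∀ p ∈ T, ∀ q ∈ T, p ≠ q → Ioc (a p) (b p) ∩ Ioc (a q) (b q) = ∅) :
    volume (⋃ p ∈ T, Ioc (a p) (c p)) ≤
      (1 + (m : ENNReal)⁻¹) * volume (⋃ p ∈ T, Ioc (b p) (c p)) := by
  classical
  have hU : (⋃ p ∈ T, Ioc (a p) (c p)) =
      ⋃ F : Finset ι, ⋃ p ∈ F.filter (· ∈ T), Ioc (a p) (c p) := by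
    ext t
    simp only [Set.mem_iUnion, Finset.mem_filter]
    constructor
    · rintro ⟨p, hp, ht⟩
      exact ⟨{p}, p, ⟨Finset.mem_singleton_self p, hp⟩, ht⟩
    · rintro ⟨F, p, ⟨_, hp⟩, ht⟩
      exact ⟨p, hp, ht⟩
  have hdir : Directed (· ⊆ ·)
      (fun F : Finset ι => ⋃ p ∈ F.filter (· ∈ T), Ioc (a p) (c p)) := by
    intro F G
    refine ⟨F ∪ G, Set.iUnion₂_subset fun p hp => ?_, Set.iUnion₂_subset fun p hp => ?_⟩
    · refine Set.subset_biUnion_of_mem (u := fun p => Ioc (a p) (c p)) ?_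
      rw [Finset.mem_filter] at hp
      exact Finset.mem_filter.2 ⟨Finset.mem_union_left G hp.1, hp.2⟩
    · refine Set.subset_biUnion_of_mem (u := fun p => Ioc (a p) (c p)) ?_
      rw [Finset.mem_filter] at hp
      exact Finset.mem_filter.2 ⟨Finset.mem_union_right F hp.1, hp.2⟩
  rw [hU, hdir.measure_iUnion]
  apply iSup_le
  intro F
  have hmemT : ∀ p ∈ F.filter (· ∈ T), p ∈ T := fun p hp => (Finset.mem_filter.1 hp).2
  refine le_trans
    (oneD_finset m hm a b c (F.filter (· ∈ T)).card (F.filter (· ∈ T)) rfl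
      (fun p hp => hab p (hmemT p hp)) (fun p hp => hc p (hmemT p hp))
      (fun p hp q hq hpq => hdisj p (hmemT p hp) q (hmemT q hq) hpq)) ?_
  apply mul_le_mul_right
  apply measure_mono
  intro t ht
  obtain ⟨p, hp, htp⟩ := Set.mem_iUnion₂.1 ht
  exact Set.mem_biUnion (hmemT p hp) htp

-- time interval endpoints of a cube
def ta {d : ℕ} (p : Idx d) : ℝ := -1 + (p.2.2 : ℝ) * δt p.1
def tb {d : ℕ} (p : Idx d) : ℝ := -1 + ((p.2.2 : ℝ) + 1) * δt p.1
def tc {d : ℕ} (m : ℕ) (p : Idx d) : ℝ := tb p + (m : ℝ) * δt p.1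

lemma tIoc_eq_ab {d : ℕ} (p : Idx d) : tIoc (δt p.1) p.2.2 = Ioc (ta p) (tb p) := rfl

lemma tab_lt {d : ℕ} (p : Idx d) : ta p < tb p := by
  have := δt_pos p.1
  rw [ta, tb]
  nlinarith

lemma tc_eq {d : ℕ} (m : ℕ) (p : Idx d) : tc m p = tb p + (m : ℝ) * (tb p - ta p) := by
  rw [tc, ta, tb]
  ring

lemma stk_eq {d : ℕ} (m : ℕ) (p : Idx d) :
    stk m p = spBox d p.1 p.2.1 ×ˢ Ioc (tb p) (tc m p) := rfl

-- the stacked counting lemma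
lemma stacked_count {d m : ℕ} (hm : 1 ≤ m) (M : Set (Idx d))
    (hdisj : M.PairwiseDisjoint (Q (d := d))) :
    ∑' p : M, volume (Q (p : Idx d)) ≤
      (1 + (m : ENNReal)⁻¹) * volume (⋃ p ∈ M, stk m p) := by
  classical
  have hcnt : M.Countable := Set.to_countable M
  have hQmeas : ∀ p ∈ M, MeasurableSet (Q (d := d) p) := fun p _ => measurableSet_Q p
  rw [← MeasureTheory.measure_biUnion hcnt hdisj hQmeas]
  -- enlarge each cube in time
  have hsub : (⋃ p ∈ M, Q (d := d) p) ⊆ ⋃ p ∈ M, spBox d p.1 p.2.1 ×ˢ Ioc (ta p) (tc m p) := by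
    refine Set.iUnion₂_mono fun p hp => ?_
    rw [Q, tIoc_eq_ab]
    apply Set.prod_mono subset_rfl
    apply Ioc_subset_Ioc_right
    rw [tc]
    have h1 : (0 : ℝ) ≤ (m : ℝ) * δt p.1 :=
      mul_nonneg (Nat.cast_nonneg m) (δt_pos p.1).le
    linarith
  refine le_trans (measure_mono hsub) ?_
  -- slicing
  set W := ⋃ p ∈ M, spBox d p.1 p.2.1 ×ˢ Ioc (ta p) (tc m p) with hWdef
  set W' := ⋃ p ∈ M, stk m p with hW'def
  have hWmeas : MeasurableSet W :=
    MeasurableSet.biUnion hcnt fun p _ =>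
      (measurableSet_spBox d p.1 p.2.1).prod measurableSet_Ioc
  have hW'meas : MeasurableSet W' :=
    MeasurableSet.biUnion hcnt fun p _ =>
      (measurableSet_spBox d p.1 p.2.1).prod measurableSet_Ioc
  have hsliceW : ∀ x : Fin d → ℝ, Prod.mk x ⁻¹' W =
      ⋃ p ∈ {p ∈ M | x ∈ spBox d p.1 p.2.1}, Ioc (ta p) (tc m p) := by
    intro x
    ext t
    simp only [hWdef, Set.mem_preimage, Set.mem_iUnion, Set.mem_prod, Set.mem_setOf_eq]
    constructor
    · rintro ⟨p, hp, hxp, htp⟩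
      exact ⟨p, ⟨hp, hxp⟩, htp⟩
    · rintro ⟨p, ⟨hp, hxp⟩, htp⟩
      exact ⟨p, hp, hxp, htp⟩
  have hsliceW' : ∀ x : Fin d → ℝ, Prod.mk x ⁻¹' W' =
      ⋃ p ∈ {p ∈ M | x ∈ spBox d p.1 p.2.1}, Ioc (tb p) (tc m p) := by
    intro x
    ext t
    simp only [hW'def, stk_eq, Set.mem_preimage, Set.mem_iUnion, Set.mem_prod, Set.mem_setOf_eq]
    constructor
    · rintro ⟨p, hp, hxp, htp⟩
      exact ⟨p, ⟨hp, hxp⟩, htp⟩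
    · rintro ⟨p, ⟨hp, hxp⟩, htp⟩
      exact ⟨p, hp, hxp, htp⟩
  have hpoint : ∀ x : Fin d → ℝ,
      volume (Prod.mk x ⁻¹' W) ≤ (1 + (m : ENNReal)⁻¹) * volume (Prod.mk x ⁻¹' W') := by
    intro x
    rw [hsliceW x, hsliceW' x]
    apply oneD_countable m hm ta tb (tc m) {p ∈ M | x ∈ spBox d p.1 p.2.1}
    · exact fun p _ => tab_lt p
    · exact fun p _ => tc_eq m p
    · intro p hp q hq hpq
      by_contra hne
      obtain ⟨t, htp, htq⟩ := Set.nonempty_iff_ne_empty.2 hne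
      have hd := hdisj hp.1 hq.1 hpq
      rw [Function.onFun, Set.disjoint_left] at hd
      exact hd (a := (x, t)) ⟨hp.2, htp⟩ ⟨hq.2, htq⟩
  calc volume W = ∫⁻ x, volume (Prod.mk x ⁻¹' W) := by
        rw [Measure.volume_eq_prod, Measure.prod_apply hWmeas]
    _ ≤ ∫⁻ x, (1 + (m : ENNReal)⁻¹) * volume (Prod.mk x ⁻¹' W') :=
        MeasureTheory.lintegral_mono hpoint
    _ = (1 + (m : ENNReal)⁻¹) * ∫⁻ x, volume (Prod.mk x ⁻¹' W') := by
        rw [MeasureTheory.lintegral_const_mul]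
        exact measurable_measure_prodMk_left hW'meas
    _ = (1 + (m : ENNReal)⁻¹) * volume W' := by
        rw [Measure.volume_eq_prod, Measure.prod_apply hW'meas]


-- the covering lemma: almost every point of A lies in a bad cube
lemma cover_null {d : ℕ} {ρ : ℝ} (hρ1 : ρ < 1) {A : Set (Pt d)}
    (hAmeas : MeasurableSet A) (hAK : A ⊆ K₁ d) :
    volume (A \ ⋃ c ∈ {c : Idx d | valid c ∧ isBad ρ A c}, Q c) = 0 := by
  classical
  set Bad := {c : Idx d | valid c ∧ isBad ρ A c} with hBadDef
  set G := ⋃ c ∈ Bad, Q (d := d) c with hGdef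
  have hGmeas : MeasurableSet G :=
    MeasurableSet.biUnion (Set.to_countable _) fun c _ => measurableSet_Q c
  set E := A \ G with hEdef
  have hEmeas : MeasurableSet E := hAmeas.diff hGmeas
  have hEK : E ⊆ K₁ d := fun x hx => hAK hx.1
  have hEfin : volume E ≠ ⊤ :=
    fun h => vol_K₁_ne_top d (top_le_iff.1 (h ▸ measure_mono hEK))
  have main : ∀ ε : ENNReal, ε ≠ 0 → volume E ≤ ENNReal.ofReal ρ * (volume E + ε) := by
    intro ε hε
    obtain ⟨U, hEU, hUopen, hUlt⟩ := Set.exists_isOpen_lt_add (μ := volume) E hEfin hε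
    set S := {c : Idx d | valid c ∧ Q c ⊆ U ∧ (Q c ∩ E).Nonempty} with hSdef
    have hSgen : ∀ c ∈ S, 1 ≤ c.1 := fun c hc => hc.1.1
    set M := maxl S with hMdef
    have hcovE : E ⊆ (⋃ p ∈ M, Q (d := d) p) ∪ (K₁ d \ halfK₁ d) := by
      intro x hx
      by_cases hxh : x ∈ halfK₁ d
      · left
        obtain ⟨ε₀, hε₀, hball⟩ := Metric.isOpen_iff.1 hUopen x (hEU hx)
        obtain ⟨n₀, hn₀⟩ := exists_pow_lt_of_lt_one (half_pos hε₀) (show (1 : ℝ)/2 < 1 by norm_num)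
        have hδ : δx (n₀ + 1) < ε₀ := by
          have h2 : ((2 : ℝ) ^ (n₀ + 1))⁻¹ = (1/2 : ℝ) ^ (n₀ + 1) := by
            rw [one_div, inv_pow]
          have heq : δx (n₀ + 1) = (1/2 : ℝ) ^ n₀ := by
            rw [δx, h2, pow_succ]
            ring
          rw [heq]
          linarith
        obtain ⟨c, hcvalid, hcn, hxc⟩ := exists_cube_mem hxh (n₀ + 1) (by omega)
        have hQU : Q c ⊆ U := by
          intro y hy
          apply hball
          rw [Metric.mem_ball]
          calc dist y x ≤ δx c.1 := dist_le_of_mem_Q hy hxc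
            _ < ε₀ := by rw [hcn]; exact hδ
        have hcS : c ∈ S := ⟨hcvalid, hQU, ⟨x, hxc, hx⟩⟩
        obtain ⟨p, hpM, hQp⟩ := exists_maxl hSgen hcS
        exact Set.mem_biUnion hpM (hQp hxc)
      · exact Or.inr ⟨hAK hx.1, hxh⟩
    have hMcnt : M.Countable := Set.to_countable M
    have hWU : (⋃ p ∈ M, Q (d := d) p) ⊆ U := Set.iUnion₂_subset fun p hp => hp.1.2.1
    have hgood : ∀ p ∈ M, volume (Q (d := d) p ∩ A) ≤ ENNReal.ofReal ρ * volume (Q p) := by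
      intro p hp
      by_contra hlt
      push_neg at hlt
      obtain ⟨x, hxQ, hxE⟩ := hp.1.2.2
      exact hxE.2 (Set.mem_biUnion (show p ∈ Bad from ⟨hp.1.1, hlt⟩) hxQ)
    have hEsplit : E ∩ (⋃ p ∈ M, Q (d := d) p) = ⋃ p ∈ M, (Q (d := d) p ∩ E) := by
      ext x
      simp only [Set.mem_inter_iff, Set.mem_iUnion]
      tauto
    calc volume E
        ≤ volume (E ∩ ⋃ p ∈ M, Q (d := d) p) + volume (E \ ⋃ p ∈ M, Q (d := d) p) :=
          measure_le_inter_add_diff _ _ _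
      _ = volume (E ∩ ⋃ p ∈ M, Q (d := d) p) := by
          have hnull : volume (E \ ⋃ p ∈ M, Q (d := d) p) = 0 := by
            refine measure_mono_null (fun x hx => ?_) (diff_halfK₁_null d)
            rcases hcovE hx.1 with h | h
            · exact absurd h hx.2
            · exact h
          rw [hnull, add_zero]
      _ = volume (⋃ p ∈ M, (Q (d := d) p ∩ E)) := by rw [hEsplit]
      _ ≤ ∑' p : M, volume (Q (d := d) (p : Idx d) ∩ E) := measure_biUnion_le volume hMcnt _
      _ ≤ ∑' p : M, ENNReal.ofReal ρ * volume (Q (d := d) (p : Idx d)) := by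
          refine ENNReal.tsum_le_tsum fun p => ?_
          refine le_trans (measure_mono ?_) (hgood p p.2)
          exact Set.inter_subset_inter_right _ (fun x hx => hx.1)
      _ = ENNReal.ofReal ρ * ∑' p : M, volume (Q (d := d) (p : Idx d)) := ENNReal.tsum_mul_left
      _ = ENNReal.ofReal ρ * volume (⋃ p ∈ M, Q (d := d) p) := by
          rw [MeasureTheory.measure_biUnion hMcnt (maxl_pairwiseDisjoint hSgen)
            (fun p _ => measurableSet_Q p)]
      _ ≤ ENNReal.ofReal ρ * volume U := mul_le_mul_right (measure_mono hWU) _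
      _ ≤ ENNReal.ofReal ρ * (volume E + ε) := mul_le_mul_right hUlt.le _
  have hle : volume E ≤ ENNReal.ofReal ρ * volume E := by
    refine ENNReal.le_of_forall_pos_le_add fun ε hε _ => ?_
    calc volume E ≤ ENNReal.ofReal ρ * (volume E + ε) :=
          main ε (by exact_mod_cast hε.ne')
      _ = ENNReal.ofReal ρ * volume E + ENNReal.ofReal ρ * ε := mul_add _ _ _
      _ ≤ ENNReal.ofReal ρ * volume E + ε := by
          refine add_le_add_right ?_ _
          exact mul_le_of_le_one_left zero_le (ENNReal.ofReal_le_one.2 hρ1.le)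
  by_contra hne
  have hlt : ENNReal.ofReal ρ * volume E < 1 * volume E := by
    rw [ENNReal.mul_lt_mul_iff_left hne hEfin]
    exact ENNReal.ofReal_lt_one.2 hρ1
  rw [one_mul] at hlt
  exact absurd hle (not_le.2 hlt)

lemma arith_final (m : ℕ) (hm : 1 ≤ m) (ρ : ℝ) (hρ : 0 ≤ ρ) :
    ENNReal.ofReal ρ * (1 + (m : ENNReal)⁻¹) = ENNReal.ofReal (ρ * ((m : ℝ) + 1) / (m : ℝ)) := by
  have hm0 : (0 : ℝ) < (m : ℝ) := by
    have : 0 < m := hm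
    exact_mod_cast this
  have hne0 : (m : ENNReal) ≠ 0 := by
    simp only [ne_eq, Nat.cast_eq_zero]
    omega
  have hnetop : (m : ENNReal) ≠ ⊤ := ENNReal.natCast_ne_top m
  rw [show ρ * ((m : ℝ) + 1) / (m : ℝ) = ρ * (((m : ℝ) + 1) / (m : ℝ)) by ring]
  rw [ENNReal.ofReal_mul hρ]
  congr 1
  rw [ENNReal.ofReal_div_of_pos hm0]
  rw [show ((m : ℝ) + 1) = (((m + 1 : ℕ)) : ℝ) by push_cast; ring]
  rw [ENNReal.ofReal_natCast, ENNReal.ofReal_natCast]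
  push_cast
  rw [← ENNReal.div_add_div_same, ENNReal.div_self hne0 hnetop, one_div]

end StackedAux

open StackedAux Set

theorem stacked_covering_lemma (d m : ℕ) (hm : 1 ≤ m) (ρ : ℝ)
    (hρ0 : 0 < ρ) (hρ1 : ρ < 1)
    (A B : Set ((Fin d → ℝ) × ℝ))
    (hAmeas : MeasurableSet A) (hBmeas : MeasurableSet B)
    (hAB : A ⊆ B) (hBK : B ⊆ K₁ d)
    (hA : volume A ≤ ENNReal.ofReal ρ * volume (K₁ d))
    (hcov : ∀ n : ℕ, 1 ≤ n → ∀ i : Fin d → ℕ, ∀ j : ℕ,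
      (∀ s, i s < 2 ^ n) → j < 4 ^ n →
      ENNReal.ofReal ρ * volume (dyadicCube d n i j) <
        volume (dyadicCube d n i j ∩ A) →
      stackedPredecessor d n m i j ⊆ B) :
    volume A ≤ ENNReal.ofReal (ρ * (m + 1) / m) * volume B := by
  classical
  by_cases hbad1 : ∃ c : Idx d, valid c ∧ isBad ρ A c ∧ c.1 = 1
  · exfalso
    obtain ⟨⟨n, i, j⟩, hcv, hcb, hc1⟩ := hbad1
    simp only at hc1
    subst hc1
    exact gen1_stacked_not_in_K₁ hm hcv.2.1 hcv.2.2
      ((hcov 1 le_rfl i j hcv.2.1 hcv.2.2 (isBad_dyadic hcb)).trans hBK)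
  push_neg at hbad1
  set Bad := {c : Idx d | valid c ∧ isBad ρ A c} with hBadDef
  have hBadgen : ∀ c ∈ Bad, 2 ≤ c.1 := by
    intro c hc
    have h1 : 1 ≤ c.1 := hc.1.1
    have h2 := hbad1 c hc.1 hc.2
    omega
  set P := {p : Idx d | ∃ c ∈ Bad, p = par c} with hPdef
  have hparfst : ∀ c : Idx d, (par c).1 = c.1 - 1 := fun c => rfl
  have hPgen : ∀ p ∈ P, 1 ≤ p.1 := by
    rintro p ⟨c, hc, rfl⟩
    rw [hparfst]
    have := hBadgen c hc
    omega
  have hPvalid : ∀ p ∈ P, valid p := by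
    rintro p ⟨c, hc, rfl⟩
    have h2 := hBadgen c hc
    exact valid_anc hc.1 (by omega) (by omega)
  have hPstk : ∀ p ∈ P, stk m p ⊆ B := by
    rintro p ⟨c, hc, rfl⟩
    refine subset_trans (stk_subset_stackedPredecessor hc.1.1) ?_
    rcases c with ⟨n, i, j⟩
    exact hcov n hc.1.1 i j hc.1.2.1 hc.1.2.2 (isBad_dyadic hc.2)
  set M := maxl P with hMdef
  have hMgood : ∀ p ∈ M, volume (Q (d := d) p ∩ A) ≤ ENNReal.ofReal ρ * volume (Q p) := by
    intro p hp
    by_contra h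
    push_neg at h
    have hpBad : p ∈ Bad := ⟨hPvalid p hp.1, h⟩
    have h2 : 2 ≤ p.1 := hBadgen p hpBad
    exact hp.2 (p.1 - 1) (by omega) (by omega) ⟨p, hpBad, rfl⟩
  have hcovnull := cover_null hρ1 hAmeas (hAB.trans hBK)
  set W := ⋃ p ∈ M, Q (d := d) p with hWdef
  have hGW : (⋃ c ∈ Bad, Q (d := d) c) ⊆ W := by
    refine Set.iUnion₂_subset fun c hc => ?_
    have h2 := hBadgen c hc
    have h1 : Q c ⊆ Q (par c) := Q_subset_anc (by omega)
    obtain ⟨p, hpM, hQp⟩ := exists_maxl hPgen (show par c ∈ P from ⟨c, hc, rfl⟩)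
    exact subset_trans h1 (subset_trans hQp (Set.subset_biUnion_of_mem hpM))
  have hAW : volume (A \ W) = 0 := by
    refine measure_mono_null (t := A \ ⋃ c ∈ Bad, Q (d := d) c) ?_ hcovnull
    intro x hx
    exact ⟨hx.1, fun hG => hx.2 (hGW hG)⟩
  have hMcnt : M.Countable := Set.to_countable M
  have hAsplit : A ∩ W = ⋃ p ∈ M, (Q (d := d) p ∩ A) := by
    ext x
    simp only [hWdef, Set.mem_inter_iff, Set.mem_iUnion]
    tauto
  have hchain : volume A ≤ ENNReal.ofReal ρ * ∑' p : M, volume (Q (d := d) (p : Idx d)) := by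
    calc volume A ≤ volume (A ∩ W) + volume (A \ W) := measure_le_inter_add_diff _ _ _
      _ = volume (A ∩ W) := by rw [hAW, add_zero]
      _ = volume (⋃ p ∈ M, (Q (d := d) p ∩ A)) := by rw [hAsplit]
      _ ≤ ∑' p : M, volume (Q (d := d) (p : Idx d) ∩ A) := measure_biUnion_le volume hMcnt _
      _ ≤ ∑' p : M, ENNReal.ofReal ρ * volume (Q (d := d) (p : Idx d)) :=
          ENNReal.tsum_le_tsum fun p => hMgood p p.2
      _ = ENNReal.ofReal ρ * ∑' p : M, volume (Q (d := d) (p : Idx d)) := ENNReal.tsum_mul_left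
  have hstk := stacked_count hm M (maxl_pairwiseDisjoint hPgen)
  have hstkB : (⋃ p ∈ M, stk m p) ⊆ B := Set.iUnion₂_subset fun p hp => hPstk p hp.1
  calc volume A ≤ ENNReal.ofReal ρ * ∑' p : M, volume (Q (d := d) (p : Idx d)) := hchain
    _ ≤ ENNReal.ofReal ρ * ((1 + (m : ENNReal)⁻¹) * volume (⋃ p ∈ M, stk m p)) :=
        mul_le_mul_right hstk _
    _ ≤ ENNReal.ofReal ρ * ((1 + (m : ENNReal)⁻¹) * volume B) := by
        refine mul_le_mul_right (mul_le_mul_right (measure_mono hstkB) _) _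
    _ = (ENNReal.ofReal ρ * (1 + (m : ENNReal)⁻¹)) * volume B := by ring
    _ = ENNReal.ofReal (ρ * (m + 1) / m) * volume B := by
        rw [arith_final m hm ρ hρ0.le]


end
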